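/- Semi-discrete energy conservation on a periodic grid (Lemma 1, matrix form). Let n̂, n₁, n₂ be positive integers. Let Ĥ, Ĵ be positive diagonal n̂×n̂ real matrices, H₁, J₁ positive diagonal n₁×n₁ real matrices, and H₂, J₂ positive diagonal n₂×n₂ real matrices. Let D₁ ∈ ℝ^{n₁×n̂}, D₂ ∈ ℝ^{n₂×n̂}, D̂₁ ∈ ℝ^{n̂×n₁}, D̂₂ ∈ ℝ^{n̂×n₂} satisfy the periodic SBP relations Ĥ·D̂₁ = −D₁ᵀ·H₁ and Ĥ·D̂₂ = −D₂ᵀ·H₂. Set H = blockdiag(H₁, H₂) and J = blockdiag(J₁, J₂), and let G be an invertible (n₁+n₂)×(n₁+n₂) real matrix such that H·J·G⁻¹ is symmetric. Suppose p : ℝ → ℝ^{n̂}, v¹ : ℝ → ℝ^{n₁}, v² : ℝ → ℝ^{n₂} are differentiable and satisfy, for all t, Ĵ·p′(t) = −(D̂₁·J₁·v¹(t) + D̂₂·J₂·v²(t)) and the stacked vector (v¹, v²)′(t) = −G·(D₁·p(t), D₂·p(t)). Then the discrete energy E(t) = ½·p(t)ᵀ·Ĥ·Ĵ·p(t) + ½·(v¹(t),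 v²(t))ᵀ·H·J·G⁻¹·(v¹(t), v²(t)) has derivative zero for every t; in particular E is constant. -/

import Mathlib

open Matrix

lemma quadDeriv {n : Type*} [Fintype n] (A : Matrix n n ℝ) (x : ℝ → n → ℝ)
    (x' : n → ℝ) (t : ℝ) (hx : HasDerivAt x x' t) :
    HasDerivAt (fun s => x s ⬝ᵥ A *ᵥ x s)
      (x' ⬝ᵥ A *ᵥ x t + x t ⬝ᵥ A *ᵥ x') t := by
  have hxi : ∀ i, HasDerivAt (fun s => x s i) (x' i) t := hasDerivAt_pi.mp hx
  have hmv : ∀ i, HasDerivAt (fun s => (A *ᵥ x s) i) ((A *ᵥ x') i) t := by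
    intro i
    simp only [mulVec, dotProduct]
    exact HasDerivAt.fun_sum fun j _ => (hxi j).const_mul (A i j)
  have h : HasDerivAt (fun s => x s ⬝ᵥ A *ᵥ x s)
      (∑ i, (x' i * (A *ᵥ x t) i + x t i * (A *ᵥ x') i)) t := by
    simp only [dotProduct]
    exact HasDerivAt.fun_sum fun i _ => (hxi i).mul (hmv i)
  simpa [dotProduct, Finset.sum_add_distrib] using h

lemma symQuad {n : Type*} [Fintype n] (A : Matrix n n ℝ) (hA : Aᵀ = A)
    (x y : n → ℝ) : x ⬝ᵥ A *ᵥ y = y ⬝ᵥ A *ᵥ x := by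
  calc x ⬝ᵥ A *ᵥ y = (x ᵥ* A) ⬝ᵥ y := dotProduct_mulVec x A y
  _ = (Aᵀ *ᵥ x) ⬝ᵥ y := by rw [mulVec_transpose]
  _ = (A *ᵥ x) ⬝ᵥ y := by rw [hA]
  _ = y ⬝ᵥ (A *ᵥ x) := dotProduct_comm _ _

lemma mulVec_dot {m n : Type*} [Fintype m] [Fintype n] (A : Matrix m n ℝ)
    (x : n → ℝ) (y : m → ℝ) : (A *ᵥ x) ⬝ᵥ y = x ⬝ᵥ (Aᵀ *ᵥ y) := by
  rw [dotProduct_comm, dotProduct_mulVec, ← mulVec_transpose, dotProduct_comm]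

lemma diagSwap {m n : Type*} [Fintype m] [Fintype n] [DecidableEq m]
    (a b : m → ℝ) (D : Matrix m n ℝ) (v : m → ℝ) (x : n → ℝ) :
    (diagonal b *ᵥ v) ⬝ᵥ ((diagonal a * D) *ᵥ x)
      = (D *ᵥ x) ⬝ᵥ ((diagonal a * diagonal b) *ᵥ v) := by
  simp only [← mulVec_mulVec, diagonal_mul_diagonal, dotProduct, mulVec_diagonal,
    Pi.mul_apply]
  exact Finset.sum_congr rfl fun i _ => by ring

/-- Semi-discrete energy conservation on a periodic grid (Lemma 1, matrix form). -/
theorem stmt0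
    (nh n1 n2 : ℕ) (hnh : 0 < nh) (hn1 : 0 < n1) (hn2 : 0 < n2)
    (Hh Jh : Matrix (Fin nh) (Fin nh) ℝ) (dHh dJh : Fin nh → ℝ)
    (hHh : Hh = diagonal dHh) (hdHh : ∀ i, 0 < dHh i)
    (hJh : Jh = diagonal dJh) (hdJh : ∀ i, 0 < dJh i)
    (H1 J1 : Matrix (Fin n1) (Fin n1) ℝ) (dH1 dJ1 : Fin n1 → ℝ)
    (hH1 : H1 = diagonal dH1) (hdH1 : ∀ i, 0 < dH1 i)
    (hJ1 : J1 = diagonal dJ1) (hdJ1 : ∀ i, 0 < dJ1 i)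
    (H2 J2 : Matrix (Fin n2) (Fin n2) ℝ) (dH2 dJ2 : Fin n2 → ℝ)
    (hH2 : H2 = diagonal dH2) (hdH2 : ∀ i, 0 < dH2 i)
    (hJ2 : J2 = diagonal dJ2) (hdJ2 : ∀ i, 0 < dJ2 i)
    (D1 : Matrix (Fin n1) (Fin nh) ℝ) (D2 : Matrix (Fin n2) (Fin nh) ℝ)
    (Dh1 : Matrix (Fin nh) (Fin n1) ℝ) (Dh2 : Matrix (Fin nh) (Fin n2) ℝ)
    (hSBP1 : Hh * Dh1 = -(D1ᵀ * H1)) (hSBP2 : Hh * Dh2 = -(D2ᵀ * H2))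
    (H J : Matrix (Fin n1 ⊕ Fin n2) (Fin n1 ⊕ Fin n2) ℝ)
    (hH : H = fromBlocks H1 0 0 H2) (hJ : J = fromBlocks J1 0 0 J2)
    (G : Matrix (Fin n1 ⊕ Fin n2) (Fin n1 ⊕ Fin n2) ℝ) (hG : IsUnit G)
    (hsym : (H * J * G⁻¹)ᵀ = H * J * G⁻¹)
    (p : ℝ → Fin nh → ℝ) (v1 : ℝ → Fin n1 → ℝ) (v2 : ℝ → Fin n2 → ℝ)
    (p' : ℝ → Fin nh → ℝ) (w' : ℝ → (Fin n1 ⊕ Fin n2) → ℝ)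
    (hp : ∀ t, HasDerivAt p (p' t) t)
    (hw : ∀ t, HasDerivAt (fun s => Sum.elim (v1 s) (v2 s)) (w' t) t)
    (hode_p : ∀ t, Jh *ᵥ p' t = -(Dh1 *ᵥ (J1 *ᵥ v1 t) + Dh2 *ᵥ (J2 *ᵥ v2 t)))
    (hode_v : ∀ t, w' t = -(G *ᵥ Sum.elim (D1 *ᵥ p t) (D2 *ᵥ p t)))
    (E : ℝ → ℝ)
    (hE : ∀ t, E t = (1/2) * (p t ⬝ᵥ (Hh * Jh) *ᵥ p t)
        + (1/2) * (Sum.elim (v1 t) (v2 t) ⬝ᵥ (H * J * G⁻¹) *ᵥ Sum.elim (v1 t) (v2 t))) :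
    ∀ t, HasDerivAt E 0 t := by
  have hEfun : E = fun t => (1/2) * (p t ⬝ᵥ (Hh * Jh) *ᵥ p t)
      + (1/2) * (Sum.elim (v1 t) (v2 t) ⬝ᵥ (H * J * G⁻¹) *ᵥ Sum.elim (v1 t) (v2 t)) :=
    funext hE
  subst hEfun
  intro t
  set A := Hh * Jh with hA
  set B := H * J * G⁻¹ with hB
  set W := Sum.elim (v1 t) (v2 t) with hW
  set U := Sum.elim (D1 *ᵥ p t) (D2 *ᵥ p t) with hU
  -- symmetry of A
  have hAsym : Aᵀ = A := by
    rw [hA, hHh, hJh, diagonal_mul_diagonal, diagonal_transpose]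
  have hHhsym : Hhᵀ = Hh := by rw [hHh, diagonal_transpose]
  have hH1sym : H1ᵀ = H1 := by rw [hH1, diagonal_transpose]
  have hH2sym : H2ᵀ = H2 := by rw [hH2, diagonal_transpose]
  -- derivative of the two quadratic forms
  have h1 := quadDeriv A p (p' t) t (hp t)
  have h2 := quadDeriv B (fun s => Sum.elim (v1 s) (v2 s)) (w' t) t (hw t)
  have hd := ((h1.const_mul ((1:ℝ)/2)).add (h2.const_mul ((1:ℝ)/2)))
  -- the derivative value is zero
  have hval : (1/2 : ℝ) * (p' t ⬝ᵥ A *ᵥ p t + p t ⬝ᵥ A *ᵥ p' t)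
      + (1/2 : ℝ) * (w' t ⬝ᵥ B *ᵥ W + W ⬝ᵥ B *ᵥ w' t) = 0 := by
    have hsymA := symQuad A hAsym (p t) (p' t)
    have hsymB := symQuad B hsym W (w' t)
    rw [hsymA, hsymB]
    have hmain : p' t ⬝ᵥ A *ᵥ p t + w' t ⬝ᵥ B *ᵥ W = 0 := by
      -- p' term
      have e1 : p' t ⬝ᵥ A *ᵥ p t = (Jh *ᵥ p' t) ⬝ᵥ (Hh *ᵥ p t) := by
        rw [mulVec_dot, mulVec_mulVec]
        have hAe : A = Jhᵀ * Hh := by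
          rw [hA, hHh, hJh]
          simp [diagonal_transpose, diagonal_mul_diagonal, mul_comm]
        rw [hAe]
      have e2 : (Dh1 *ᵥ (J1 *ᵥ v1 t)) ⬝ᵥ (Hh *ᵥ p t)
          = -((J1 *ᵥ v1 t) ⬝ᵥ ((H1 * D1) *ᵥ p t)) := by
        rw [mulVec_dot, mulVec_mulVec]
        have : Dh1ᵀ * Hh = -(H1 * D1) := by
          calc Dh1ᵀ * Hh = (Hhᵀ * Dh1)ᵀ := by rw [transpose_mul, transpose_transpose]
          _ = (Hh * Dh1)ᵀ := by rw [hHhsym]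
          _ = (-(D1ᵀ * H1))ᵀ := by rw [hSBP1]
          _ = -(H1ᵀ * D1) := by rw [transpose_neg, transpose_mul, transpose_transpose]
          _ = -(H1 * D1) := by rw [hH1sym]
        rw [this, neg_mulVec, dotProduct_neg]
      have e3 : (Dh2 *ᵥ (J2 *ᵥ v2 t)) ⬝ᵥ (Hh *ᵥ p t)
          = -((J2 *ᵥ v2 t) ⬝ᵥ ((H2 * D2) *ᵥ p t)) := by
        rw [mulVec_dot, mulVec_mulVec]
        have : Dh2ᵀ * Hh = -(H2 * D2) := by
          calc Dh2ᵀ * Hh = (Hhᵀ * Dh2)ᵀ := by rw [transpose_mul, transpose_transpose]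
          _ = (Hh * Dh2)ᵀ := by rw [hHhsym]
          _ = (-(D2ᵀ * H2))ᵀ := by rw [hSBP2]
          _ = -(H2ᵀ * D2) := by rw [transpose_neg, transpose_mul, transpose_transpose]
          _ = -(H2 * D2) := by rw [hH2sym]
        rw [this, neg_mulVec, dotProduct_neg]
      have pterm : p' t ⬝ᵥ A *ᵥ p t
          = (J1 *ᵥ v1 t) ⬝ᵥ ((H1 * D1) *ᵥ p t) + (J2 *ᵥ v2 t) ⬝ᵥ ((H2 * D2) *ᵥ p t) := by
        rw [e1, hode_p t, neg_dotProduct, add_dotProduct, e2, e3]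
        ring
      -- w' term
      have hGinv : G⁻¹ * G = 1 :=
        nonsing_inv_mul G ((isUnit_iff_isUnit_det G).mp hG)
      have hGB : Gᵀ * B = H * J := by
        calc Gᵀ * B = Gᵀ * Bᵀ := by rw [hsym]
        _ = (B * G)ᵀ := (transpose_mul B G).symm
        _ = (H * J)ᵀ := by rw [hB, mul_assoc, hGinv, mul_one]
        _ = H * J := by
            rw [hH, hJ, hH1, hH2, hJ1, hJ2]
            simp [fromBlocks_transpose, fromBlocks_multiply, diagonal_mul_diagonal,
              mul_comm]
      have wterm : w' t ⬝ᵥ B *ᵥ W = -(U ⬝ᵥ (H * J) *ᵥ W) := by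
        rw [hode_v t, neg_dotProduct, ← hU, mulVec_dot, mulVec_mulVec, hGB]
      -- block computation
      have hHJmul : (H * J) *ᵥ W = Sum.elim ((H1 * J1) *ᵥ v1 t) ((H2 * J2) *ᵥ v2 t) := by
        rw [hH, hJ, fromBlocks_multiply, hW]
        simp [fromBlocks_mulVec]
      rw [pterm, wterm, hHJmul, hU, sumElim_dotProduct_sumElim]
      -- now a diagonal coordinate computation
      rw [hH1, hH2, hJ1, hJ2, diagSwap dH1 dJ1 D1 (v1 t) (p t),
        diagSwap dH2 dJ2 D2 (v2 t) (p t)]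
      ring
    linarith [hmain]
  exact hd.congr_deriv hval
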